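/- Let S be a pre-Hilbert space and A a splitting subspace of S (i.e. A ⊕ A^⊥ = S). Then for every subset B ⊆ A, the double orthocomplement of B computed inside the inner product space A equals the double orthocomplement of B computed inside S: B^{⊥_A ⊥_A} = B^{⊥_S ⊥_S}. -/

import Mathlib

variable {𝕜 S : Type*} [RCLike 𝕜] [NormedAddCommGroup S] [InnerProductSpace 𝕜 S]

/-- The orthogonal of a subset `B` of `S`: `{x ∈ S : ⟨x,b⟩ = 0 for all b ∈ B}`. -/
def perpS (B : Set S) : Set S := {x : S | ∀ b ∈ B, (inner 𝕜 x b : 𝕜) = 0}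

/-- The orthogonal of `B ⊆ A` computed inside `A`: `B^{⊥_A} = B^{⊥_S} ∩ A`. -/
def perpIn (A : Submodule 𝕜 S) (B : Set S) : Set S := perpS (𝕜 := 𝕜) B ∩ (A : Set S)

lemma perpS_anti {B C : Set S} (h : B ⊆ C) : perpS (𝕜 := 𝕜) C ⊆ perpS (𝕜 := 𝕜) B :=
  fun _ hx b hb => hx b (h hb)

lemma aorth_subset_perpS {A : Submodule 𝕜 S} {B : Set S} (hB : B ⊆ (A : Set S)) :
    (Aᗮ : Set S) ⊆ perpS (𝕜 := 𝕜) B := by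
  intro z hz b hb
  have := (Submodule.mem_orthogonal A z).mp hz b (hB hb)
  rw [← inner_conj_symm, this, map_zero]

/-- If `A` splits, then `B^{⊥⊥} ⊆ A` for `B ⊆ A`. -/
lemma double_perp_subset {A : Submodule 𝕜 S} (hA : A ⊔ Aᗮ = ⊤) {B : Set S}
    (hB : B ⊆ (A : Set S)) :
    perpS (𝕜 := 𝕜) (perpS (𝕜 := 𝕜) B) ⊆ (A : Set S) := by
  intro x hx
  have hxtop : x ∈ A ⊔ Aᗮ := by rw [hA]; trivial
  obtain ⟨a, ha, a', ha', rfl⟩ := Submodule.mem_sup.mp hxtop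
  have h1 : (inner 𝕜 (a + a') a' : 𝕜) = 0 := hx a' (aorth_subset_perpS hB ha')
  have h2 : (inner 𝕜 a a' : 𝕜) = 0 := (Submodule.mem_orthogonal A a').mp ha' a ha
  have h3 : (inner 𝕜 a' a' : 𝕜) = 0 := by
    rw [inner_add_left, h2, zero_add] at h1; exact h1
  have : a' = 0 := inner_self_eq_zero.mp h3
  simpa [this] using ha

theorem splitting_double_perp (A : Submodule 𝕜 S) (hA : A ⊔ Aᗮ = ⊤)
    (B : Set S) (hB : B ⊆ (A : Set S)) :
    perpIn A (perpIn A B) = perpS (𝕜 := 𝕜) (perpS (𝕜 := 𝕜) B) := by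
  apply Set.Subset.antisymm
  · rintro x ⟨hx1, hx2⟩ y hy
    -- y ∈ perpS B; decompose y = a + a'
    have hytop : y ∈ A ⊔ Aᗮ := by rw [hA]; trivial
    obtain ⟨a, ha, a', ha', rfl⟩ := Submodule.mem_sup.mp hytop
    have haB : a ∈ perpIn A B := by
      refine ⟨fun b hb => ?_, ha⟩
      have h1 : (inner 𝕜 (a + a') b : 𝕜) = 0 := hy b hb
      have h2 : (inner 𝕜 a' b : 𝕜) = 0 := aorth_subset_perpS (𝕜 := 𝕜) hB ha' b hb
      rw [inner_add_left, h2, add_zero] at h1; exact h1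
    have hxa : (inner 𝕜 x a : 𝕜) = 0 := hx1 a haB
    have hxa' : (inner 𝕜 x a' : 𝕜) = 0 := (Submodule.mem_orthogonal A a').mp ha' x hx2
    rw [inner_add_right, hxa, hxa', add_zero]
  · intro x hx
    refine ⟨fun y hy => hx y ?_, double_perp_subset hA hB hx⟩
    exact hy.1
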